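/- Let ω > 0 and t with sin(ωt) ≠ 0, fix y ∈ ℝ³, and define K(x) = exp(iω(|x−y|²/2·cot(ωt) − x̃·y)) with x̃ = (−x₂, x₁, (csc(ωt)−cot(ωt))x₃). Then the operator ωL_z applied to K, where L_z = i(x₂∂_{x₁} − x₁∂_{x₂}), equals ω²[(x₂y₁ − x₁y₂)cot(ωt) + x₁y₁ + x₂y₂]·K. -/

import Mathlib

open Real Complex

noncomputable def pd1 (u : ℝ → ℝ → ℝ → ℂ) : ℝ → ℝ → ℝ → ℂ :=
  fun a b c => deriv (fun s => u s b c) a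

noncomputable def pd2 (u : ℝ → ℝ → ℝ → ℂ) : ℝ → ℝ → ℝ → ℂ :=
  fun a b c => deriv (fun s => u a s c) b

lemma auxderiv (A M C E F : ℂ) (w x : ℝ) :
    HasDerivAt (fun s : ℝ => Complex.exp (A * ((((s:ℂ) - (w:ℂ))^2 + C)/2 * M - (E * (s:ℂ) + F))))
      (A * (((x:ℂ) - (w:ℂ)) * M - E) *
        Complex.exp (A * ((((x:ℂ) - (w:ℂ))^2 + C)/2 * M - (E * (x:ℂ) + F)))) x := by
  have hg : HasDerivAt (fun z : ℂ => Complex.exp (A * (((z - (w:ℂ))^2 + C)/2 * M - (E * z + F))))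
      (A * (((x:ℂ) - (w:ℂ)) * M - E) *
        Complex.exp (A * ((((x:ℂ) - (w:ℂ))^2 + C)/2 * M - (E * (x:ℂ) + F)))) (x:ℂ) := by
    have h0 : HasDerivAt (fun z : ℂ => z - (w:ℂ)) 1 (x:ℂ) := (hasDerivAt_id _).sub_const _
    have h2 := ((((h0.pow 2).add_const C).div_const 2).mul_const M).sub
      (((hasDerivAt_id ((x:ℂ))).const_mul E).add_const F)
    have h3 := (h2.const_mul A).cexp
    simp only [id_eq] at h3
    convert h3 using 1
    · rfl
    · rfl
    simp only [Pi.sub_apply, Pi.pow_apply]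
    ring_nf
  exact hg.comp_ofReal

theorem angular_momentum_on_kernel (ω t : ℝ) (hω : 0 < ω) (hsin : Real.sin (ω * t) ≠ 0)
    (y₁ y₂ y₃ : ℝ) :
    let cot : ℝ := Real.cos (ω * t) / Real.sin (ω * t)
    let csc : ℝ := 1 / Real.sin (ω * t)
    let xty : ℝ → ℝ → ℝ → ℝ := fun a b c => -b * y₁ + a * y₂ + (csc - cot) * c * y₃
    let K : ℝ → ℝ → ℝ → ℂ := fun a b c =>
      Complex.exp (Complex.I * (ω : ℂ) *
        (((a - y₁) ^ 2 + (b - y₂) ^ 2 + (c - y₃) ^ 2) / 2 * (cot : ℂ) - (xty a b c : ℂ)))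
    ∀ a b c : ℝ,
      (ω : ℂ) * (Complex.I * ((b : ℂ) * pd1 K a b c - (a : ℂ) * pd2 K a b c)) =
        (ω : ℂ) ^ 2 * (((b * y₁ - a * y₂) * cot + a * y₁ + b * y₂ : ℝ) : ℂ) * K a b c := by
  intro cot csc xty K a b c
  set A : ℂ := Complex.I * (ω : ℂ) with hA
  set M : ℂ := (cot : ℂ) with hM
  -- pd1
  have h1eq : (fun s : ℝ => K s b c) = (fun s : ℝ => Complex.exp (A *
      ((((s:ℂ) - (y₁:ℂ))^2 + (((b:ℂ) - (y₂:ℂ))^2 + ((c:ℂ) - (y₃:ℂ))^2))/2 * M -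
        ((y₂:ℂ) * (s:ℂ) + ((-(b:ℂ)) * (y₁:ℂ) + ((csc:ℂ) - (cot:ℂ)) * (c:ℂ) * (y₃:ℂ)))))) := by
    funext s
    simp only [K, xty]
    congr 1
    push_cast
    ring
  have h2eq : (fun s : ℝ => K a s c) = (fun s : ℝ => Complex.exp (A *
      ((((s:ℂ) - (y₂:ℂ))^2 + (((a:ℂ) - (y₁:ℂ))^2 + ((c:ℂ) - (y₃:ℂ))^2))/2 * M -
        ((-(y₁:ℂ)) * (s:ℂ) + ((a:ℂ) * (y₂:ℂ) + ((csc:ℂ) - (cot:ℂ)) * (c:ℂ) * (y₃:ℂ)))))) := by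
    funext s
    simp only [K, xty]
    congr 1
    push_cast
    ring
  have hd1 := (auxderiv A M (((b:ℂ) - (y₂:ℂ))^2 + ((c:ℂ) - (y₃:ℂ))^2) ((y₂:ℂ))
      ((-(b:ℂ)) * (y₁:ℂ) + ((csc:ℂ) - (cot:ℂ)) * (c:ℂ) * (y₃:ℂ)) y₁ a).deriv
  have hd2 := (auxderiv A M (((a:ℂ) - (y₁:ℂ))^2 + ((c:ℂ) - (y₃:ℂ))^2) ((-(y₁:ℂ)))
      ((a:ℂ) * (y₂:ℂ) + ((csc:ℂ) - (cot:ℂ)) * (c:ℂ) * (y₃:ℂ)) y₂ b).deriv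
  have hK1 : Complex.exp (A * ((((a:ℂ) - (y₁:ℂ))^2 + (((b:ℂ) - (y₂:ℂ))^2 + ((c:ℂ) - (y₃:ℂ))^2))/2 * M -
        ((y₂:ℂ) * (a:ℂ) + ((-(b:ℂ)) * (y₁:ℂ) + ((csc:ℂ) - (cot:ℂ)) * (c:ℂ) * (y₃:ℂ))))) = K a b c := by
    simp only [K, xty]
    congr 1
    push_cast
    ring
  have hK2 : Complex.exp (A * ((((b:ℂ) - (y₂:ℂ))^2 + (((a:ℂ) - (y₁:ℂ))^2 + ((c:ℂ) - (y₃:ℂ))^2))/2 * M -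
        ((-(y₁:ℂ)) * (b:ℂ) + ((a:ℂ) * (y₂:ℂ) + ((csc:ℂ) - (cot:ℂ)) * (c:ℂ) * (y₃:ℂ))))) = K a b c := by
    simp only [K, xty]
    congr 1
    push_cast
    ring
  simp only [pd1, pd2, h1eq, h2eq, hd1, hd2, hK1, hK2]
  set X : ℂ := K a b c with hX
  push_cast
  rw [hA, hM]
  linear_combination (-(ω:ℂ)^2 * (((b:ℂ) * (y₁:ℂ) - (a:ℂ) * (y₂:ℂ)) * (cot:ℂ) + (a:ℂ) * (y₁:ℂ) + (b:ℂ) * (y₂:ℂ)) * X) * Complex.I_sq
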